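/- Let (u^k, x^k, y^k), k ≥ 1, be the sequence generated by the T-ADMM algorithm with penalty parameter ρ ≥ 2. Then the primal residual vanishes: ‖x^{k+1} − x₀ − u^{k+1}‖₂² → 0 as k → ∞; that is, in the limit the equality constraint x = x₀ + u of the PAPR reduction model is satisfied. -/

import Mathlib

open scoped InnerProductSpace RealInnerProductSpace

/-- The augmented Lagrangian
`L_ρ(u, x, y) = (1/2)‖u‖₂² + Re(yᴴ(x − x₀ − u)) + (ρ/2)‖x − x₀ − u‖₂²`. -/
noncomputable def augLag {n : ℕ} (ρ : ℝ) (x₀ u x y : EuclideanSpace ℂ (Fin n)) : ℝ :=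
  (1/2) * ‖u‖^2 + (⟪y, x - x₀ - u⟫_ℂ).re + (ρ/2) * ‖x - x₀ - u‖^2

private lemma re_inner_eq {n : ℕ} (a b : EuclideanSpace ℂ (Fin n)) :
    (⟪a, b⟫_ℂ).re = ⟪a, b⟫_ℝ := by
  simp [inner, RCLike.inner_apply, map_sum]

/-- If `t*a + t²*b ≥ 0` for all `t ∈ (0,1]`, then `a ≥ 0`. -/
private lemma aux_lin (a b : ℝ) (h : ∀ t : ℝ, 0 < t → t ≤ 1 → 0 ≤ t * a + t ^ 2 * b) :
    0 ≤ a := by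
  by_contra hneg
  push_neg at hneg
  rcases le_or_gt b 0 with hb | hb
  · have := h 1 one_pos le_rfl; nlinarith
  · have ht0 : 0 < min 1 (-a / (2 * b)) :=
      lt_min one_pos (div_pos (by linarith) (by linarith))
    have ht1 : min 1 (-a / (2 * b)) ≤ 1 := min_le_left _ _
    have h2 : min 1 (-a / (2 * b)) ≤ -a / (2 * b) := min_le_right _ _
    have hfin := h _ ht0 ht1
    set t := min 1 (-a / (2 * b)) with ht
    have h3 : t * b ≤ -a / (2 * b) * b := by nlinarith
    have h4 : -a / (2 * b) * b = -a / 2 := by field_simp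
    nlinarith

/-- Quadratic expansion of the augmented Lagrangian in the `x` variable. -/
private lemma augLag_expand {n : ℕ} (ρ : ℝ) (x₀ u w z y : EuclideanSpace ℂ (Fin n)) :
    augLag ρ x₀ u z y =
      augLag ρ x₀ u w y + ⟪y + ρ • (w - x₀ - u), z - w⟫_ℝ + (ρ/2) * ‖z - w‖^2 := by
  simp only [augLag, re_inner_eq]
  have h1 : z - x₀ - u = (w - x₀ - u) + (z - w) := by abel
  rw [h1, norm_add_sq_real, inner_add_left, real_inner_smul_left, inner_add_right]
  ring

set_option maxHeartbeats 1600000 in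
theorem stmt_12 (ρ : ℝ) (hρ : 0 < ρ)
    {n : ℕ} (x₀ : EuclideanSpace ℂ (Fin n)) (β : ℝ) (hβ : 0 < β)
    (u x y : ℕ → EuclideanSpace ℂ (Fin n))
    -- `u`-update: the unique minimizer of `u ↦ L_ρ(u, xᵏ, yᵏ)`
    (hu : ∀ k, 1 ≤ k → u (k+1) = (ρ/(ρ+1)) • (x k - x₀ + ρ⁻¹ • y k))
    -- `x`-update: a minimizer of `x ↦ L_ρ(uᵏ⁺¹, x, yᵏ)` over `X = {x : maxᵢ |xᵢ| ≤ β}`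
    (hxfeas : ∀ k, 1 ≤ k → ∀ i, ‖x (k+1) i‖ ≤ β)
    (hxmin : ∀ k, 1 ≤ k → ∀ z : EuclideanSpace ℂ (Fin n), (∀ i, ‖z i‖ ≤ β) →
      augLag ρ x₀ (u (k+1)) (x (k+1)) (y k) ≤ augLag ρ x₀ (u (k+1)) z (y k))
    -- multiplier update
    (hy : ∀ k, 1 ≤ k → y (k+1) = y k + ρ • (x (k+1) - x₀ - u (k+1)))
    (hρ2 : 2 ≤ ρ) :
    Filter.Tendsto (fun k => ‖x (k+1) - x₀ - u (k+1)‖^2) Filter.atTop (nhds 0) := by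
  have hρ0 : (ρ:ℝ) ≠ 0 := ne_of_gt hρ
  have hρ1 : ρ + 1 ≠ 0 := by positivity
  set X : Set (EuclideanSpace ℂ (Fin n)) :=
    {z : EuclideanSpace ℂ (Fin n) | ∀ i, ‖z i‖ ≤ β} with hXdef
  -- basic facts about X
  have h0X : (0 : EuclideanSpace ℂ (Fin n)) ∈ X := by
    intro i
    have h0 : (0 : EuclideanSpace ℂ (Fin n)) i = 0 := rfl
    rw [h0]
    simpa using hβ.le
  have hXconv : Convex ℝ X := by
    intro w hw z hz s t hs ht hst i
    have hi : (s • w + t • z) i = ((s:ℝ):ℂ) * w i + ((t:ℝ):ℂ) * z i := by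
      simp only [PiLp.add_apply, PiLp.smul_apply, Complex.real_smul]
    rw [hi]
    calc ‖((s:ℝ):ℂ) * w i + ((t:ℝ):ℂ) * z i‖
        ≤ ‖((s:ℝ):ℂ) * w i‖ + ‖((t:ℝ):ℂ) * z i‖ :=
          norm_add_le _ _
      _ = s * ‖w i‖ + t * ‖z i‖ := by
          rw [norm_mul, norm_mul, Complex.norm_real, Complex.norm_real, Real.norm_eq_abs,
            Real.norm_eq_abs,
            abs_of_nonneg hs, abs_of_nonneg ht]
      _ ≤ s * β + t * β := by
          gcongr
          · exact hw i
          · exact hz i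
      _ = β := by rw [← add_mul, hst, one_mul]
  have hXclosed : IsClosed X := by
    have hX : X = ⋂ i, {z : EuclideanSpace ℂ (Fin n) | ‖z i‖ ≤ β} := by
      ext z; simp [hXdef, Set.mem_iInter]
    rw [hX]
    refine isClosed_iInter fun i => ?_
    have hcont : Continuous fun z : EuclideanSpace ℂ (Fin n) => ‖z i‖ :=
      continuous_norm.comp (EuclideanSpace.proj (𝕜 := ℂ) i).continuous
    exact isClosed_le hcont continuous_const
  -- segment feasibility
  have hseg : ∀ w z : EuclideanSpace ℂ (Fin n), w ∈ X → z ∈ X →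
      ∀ t : ℝ, 0 ≤ t → t ≤ 1 → w + t • (z - w) ∈ X := by
    intro w z hw hz t ht0 ht1 i
    have h1t : (0:ℝ) ≤ 1 - t := by linarith
    have hi : (w + t • (z - w)) i = ((1 - t : ℝ):ℂ) * w i + ((t:ℝ):ℂ) * z i := by
      simp only [PiLp.add_apply, PiLp.smul_apply, PiLp.sub_apply, Complex.real_smul]
      push_cast
      ring
    rw [hi]
    calc ‖((1 - t : ℝ):ℂ) * w i + ((t:ℝ):ℂ) * z i‖
        ≤ ‖((1 - t : ℝ):ℂ) * w i‖ + ‖((t:ℝ):ℂ) * z i‖ :=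
          norm_add_le _ _
      _ = (1 - t) * ‖w i‖ + t * ‖z i‖ := by
          rw [norm_mul, norm_mul, Complex.norm_real, Complex.norm_real, Real.norm_eq_abs,
            Real.norm_eq_abs,
            abs_of_nonneg ht0, abs_of_nonneg h1t]
      _ ≤ (1 - t) * β + t * β := by
          gcongr
          · exact hw i
          · exact hz i
      _ = β := by ring
  -- projection of x₀ onto X
  obtain ⟨xs, hxsX, hxsmin⟩ :=
    exists_norm_eq_iInf_of_complete_convex ⟨0, h0X⟩ (hXclosed.isComplete) hXconv x₀
  have hproj : ∀ z ∈ X, ⟪x₀ - xs, z - xs⟫_ℝ ≤ 0 :=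
    (norm_eq_iInf_iff_real_inner_le_zero hXconv hxsX).mp hxsmin
  set ys : EuclideanSpace ℂ (Fin n) := xs - x₀ with hysdef
  have hysVI : ∀ z ∈ X, 0 ≤ ⟪ys, z - xs⟫_ℝ := by
    intro z hz
    have h1 := hproj z hz
    have h2 : ys = -(x₀ - xs) := by rw [hysdef]; abel
    rw [h2, inner_neg_left]
    linarith
  -- rearranged u-update
  have hu1 : ∀ k, 1 ≤ k → u (k+1) + ρ • u (k+1) = ρ • (x k - x₀) + y k := by
    intro k hk
    rw [hu k hk]
    match_scalars <;> field_simp <;> ring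
  -- key form of u-optimality
  have heq : ∀ k, 1 ≤ k → u (k+1) = y (k+1) + ρ • (x k - x (k+1)) := by
    intro k hk
    have h1 := hu1 k hk
    rw [hy k hk]
    have h2 : y k + ρ • (x (k+1) - x₀ - u (k+1)) + ρ • (x k - x (k+1))
        = (ρ • (x k - x₀) + y k) - ρ • u (k+1) := by
      simp only [smul_sub, smul_add]
      abel
    rw [h2, ← h1]
    abel
  -- variational inequality for the x-update
  have hVI : ∀ k, 1 ≤ k → ∀ z ∈ X, 0 ≤ ⟪y (k+1), z - x (k+1)⟫_ℝ := by
    intro k hk z hz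
    rw [hy k hk]
    apply aux_lin _ ((ρ/2) * ‖z - x (k+1)‖^2)
    intro t ht0 ht1
    have hzt : x (k+1) + t • (z - x (k+1)) ∈ X :=
      hseg (x (k+1)) z (hxfeas k hk) hz t ht0.le ht1
    have hmin := hxmin k hk _ hzt
    rw [augLag_expand ρ x₀ (u (k+1)) (x (k+1)) (x (k+1) + t • (z - x (k+1))) (y k)] at hmin
    have h2 : x (k+1) + t • (z - x (k+1)) - x (k+1) = t • (z - x (k+1)) := by abel
    rw [h2, real_inner_smul_right, norm_smul, Real.norm_eq_abs, abs_of_pos ht0, mul_pow] at hmin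
    nlinarith [hmin]
  -- the Lyapunov decrease
  have hdec : ∀ k, 2 ≤ k →
      ‖y (k+1) - ys‖^2 + ρ^2 * ‖x (k+1) - xs‖^2 + ρ^2 * ‖x (k+1) - x₀ - u (k+1)‖^2
        ≤ ‖y k - ys‖^2 + ρ^2 * ‖x k - xs‖^2 := by
    intro m hm
    obtain ⟨j, rfl⟩ : ∃ j, m = j + 2 := ⟨m - 2, by omega⟩
    have hm1 : 1 ≤ j + 2 := by omega
    have hm1' : 1 ≤ j + 1 := by omega
    set a : EuclideanSpace ℂ (Fin n) := u (j+2+1) with ha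
    set rr : EuclideanSpace ℂ (Fin n) := x (j+2+1) - x₀ - a with hrr
    set d : EuclideanSpace ℂ (Fin n) := x (j+2) - x (j+2+1) with hd
    set p : EuclideanSpace ℂ (Fin n) := x (j+2+1) - xs with hp
    set w : EuclideanSpace ℂ (Fin n) := y (j+2+1) - ys with hw
    clear_value a rr d p w
    have hxfeas' : x (j+2+1) ∈ X := hxfeas (j+2) hm1
    have hxfeas'' : x (j+2) ∈ X := hxfeas (j+1) hm1'
    have f1 : 0 ≤ ⟪ys, p⟫_ℝ := by
      rw [hp]; exact hysVI _ hxfeas'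
    have f2 : ⟪y (j+2+1), p⟫_ℝ ≤ 0 := by
      have h1 := hVI (j+2) hm1 xs hxsX
      have h2 : xs - x (j+2+1) = -p := by rw [hp]; abel
      rw [h2, inner_neg_right] at h1
      linarith
    have f3 : a = y (j+2+1) + ρ • d := by
      have h0 := heq (j+2) hm1
      rw [← ha, ← hd] at h0
      exact h0
    have f4 : y (j+2+1) = y (j+2) + ρ • rr := by
      have h0 := hy (j+2) hm1
      rw [← ha, ← hrr] at h0
      exact h0
    have f5 : 0 ≤ ⟪d, rr⟫_ℝ := by
      have h1 := hVI (j+1) hm1' (x (j+2+1)) hxfeas'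
      have h2 := hVI (j+2) hm1 (x (j+2)) hxfeas''
      have h3 : (j+1+1) = (j+2) := by norm_num
      rw [h3] at h1
      have h4 : x (j+2+1) - x (j+2) = -d := by rw [hd]; abel
      rw [h4, inner_neg_right] at h1
      have h5 : x (j+2) - x (j+2+1) = d := hd.symm
      rw [h5] at h2
      have h6 : ⟪y (j+2+1), d⟫_ℝ - ⟪y (j+2), d⟫_ℝ = ρ * ⟪rr, d⟫_ℝ := by
        rw [← inner_sub_left, f4]
        have he : y (j+2) + ρ • rr - y (j+2) = ρ • rr := by abel
        rw [he, real_inner_smul_left]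
      have h7 : 0 ≤ ρ * ⟪rr, d⟫_ℝ := by linarith
      have h8 : 0 ≤ ⟪rr, d⟫_ℝ := by
        by_contra hc
        push_neg at hc
        nlinarith
      rwa [real_inner_comm]
    have hdecomp : rr = p + ys - a := by
      rw [hrr, hp, hysdef]; abel
    have hI1 : 0 ≤ (1/2) * ‖a‖^2 - (1/2) * ‖ys‖^2 + ⟪ys, rr⟫_ℝ := by
      have e1 : ‖a - ys‖^2 = ‖a‖^2 - 2 * ⟪a, ys⟫_ℝ + ‖ys‖^2 := norm_sub_sq_real a ys
      have e2 : ⟪ys, rr⟫_ℝ = ⟪ys, p⟫_ℝ + ‖ys‖^2 - ⟪a, ys⟫_ℝ := by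
        rw [hdecomp, inner_sub_right, inner_add_right, real_inner_self_eq_norm_sq,
          real_inner_comm ys a]
      nlinarith [sq_nonneg ‖a - ys‖, f1]
    have hI2 : ⟪y (j+2+1), rr⟫_ℝ + ρ * ⟪d, rr⟫_ℝ - ρ * ⟪d, p⟫_ℝ
        ≤ (1/2) * ‖ys‖^2 - (1/2) * ‖a‖^2 := by
      have e1 : ‖ys‖^2 = ‖a‖^2 + 2 * ⟪a, ys - a⟫_ℝ + ‖ys - a‖^2 := by
        have hh : ys = a + (ys - a) := by abel
        calc ‖ys‖^2 = ‖a + (ys - a)‖^2 := by rw [← hh]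
          _ = ‖a‖^2 + 2 * ⟪a, ys - a⟫_ℝ + ‖ys - a‖^2 := norm_add_sq_real a (ys - a)
      have e2 : ys - a = rr - p := by rw [hdecomp]; abel
      have e3 : ⟪a, ys - a⟫_ℝ = ⟪y (j+2+1), rr⟫_ℝ - ⟪y (j+2+1), p⟫_ℝ
          + ρ * ⟪d, rr⟫_ℝ - ρ * ⟪d, p⟫_ℝ := by
        rw [e2, f3]
        simp only [inner_add_left, inner_sub_left, inner_sub_right, real_inner_smul_left]
        ring
      nlinarith [sq_nonneg ‖ys - a‖, f2]
    have hstar : ⟪w, rr⟫_ℝ + ρ * ⟪d, rr⟫_ℝ - ρ * ⟪d, p⟫_ℝ ≤ 0 := by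
      have e1 : ⟪w, rr⟫_ℝ = ⟪y (j+2+1), rr⟫_ℝ - ⟪ys, rr⟫_ℝ := by
        rw [hw, inner_sub_left]
      linarith
    have hVy : ‖y (j+2) - ys‖^2 = ‖w‖^2 - 2 * (ρ * ⟪w, rr⟫_ℝ) + ρ^2 * ‖rr‖^2 := by
      have e0 : y (j+2) - ys = w - ρ • rr := by
        rw [hw, f4]; abel
      rw [e0, norm_sub_sq_real, real_inner_smul_right, norm_smul, Real.norm_eq_abs,
        abs_of_pos hρ, mul_pow]
    have hVx : ‖x (j+2) - xs‖^2 = ‖d‖^2 + 2 * ⟪d, p⟫_ℝ + ‖p‖^2 := by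
      have e0 : x (j+2) - xs = d + p := by rw [hd, hp]; abel
      rw [e0, norm_add_sq_real]
    rw [hVy, hVx]
    nlinarith [mul_le_mul_of_nonneg_left hstar hρ.le, mul_nonneg (mul_nonneg hρ.le hρ.le) f5,
      mul_nonneg (mul_nonneg hρ.le hρ.le) (sq_nonneg ‖d‖)]
  -- telescoping and convergence
  have hgnn : ∀ k : ℕ, (0:ℝ) ≤ ‖x (k+1) - x₀ - u (k+1)‖^2 := fun k => sq_nonneg _
  have hVnn : ∀ k : ℕ, (0:ℝ) ≤ ‖y k - ys‖^2 + ρ^2 * ‖x k - xs‖^2 := fun k => by positivity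
  have hsum : ∀ N : ℕ, ρ^2 * (∑ i ∈ Finset.range N, ‖x (i+2+1) - x₀ - u (i+2+1)‖^2)
      + (‖y (N+2) - ys‖^2 + ρ^2 * ‖x (N+2) - xs‖^2)
      ≤ ‖y 2 - ys‖^2 + ρ^2 * ‖x 2 - xs‖^2 := by
    intro N
    induction N with
    | zero => simp
    | succ N ih =>
      rw [Finset.sum_range_succ]
      have h1 := hdec (N + 2) (by omega)
      have h3 : N + 1 + 2 = N + 2 + 1 := by omega
      rw [h3]
      nlinarith [h1]
  have hsum2 : ∀ N : ℕ, ∑ i ∈ Finset.range N, ‖x (i+2+1) - x₀ - u (i+2+1)‖^2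
      ≤ (‖y 2 - ys‖^2 + ρ^2 * ‖x 2 - xs‖^2) / ρ^2 := by
    intro N
    have h1 := hsum N
    have h2 := hVnn (N + 2)
    rw [le_div_iff₀ (by positivity : (0:ℝ) < ρ^2)]
    nlinarith
  have hsummable : Summable (fun i : ℕ => ‖x (i+2+1) - x₀ - u (i+2+1)‖^2) :=
    summable_of_sum_range_le (fun i => hgnn _) hsum2
  have htend : Filter.Tendsto (fun i : ℕ => ‖x (i+2+1) - x₀ - u (i+2+1)‖^2)
      Filter.atTop (nhds 0) := hsummable.tendsto_atTop_zero
  exact (Filter.tendsto_add_atTop_iff_nat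
    (f := fun k : ℕ => ‖x (k+1) - x₀ - u (k+1)‖^2) (l := nhds 0) 2).mp htend
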